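/- In the basic justification logic J with axiomatically appropriate constant specification CS (Lifting Lemma): if F is derivable in J_CS from hypotheses A₁, ..., Aₙ, then there exist a justification term t built from variables x₁, ..., xₙ such that t:F is derivable in J_CS from hypotheses x₁:A₁, ..., xₙ:Aₙ. -/
import Mathlib


/-- Justification terms of the basic justification logic J: variables,
constants, application `·` and sum `+`. -/
inductive Tm : Type
  | var : ℕ → Tm
  | const : ℕ → Tm
  | app : Tm → Tm → Tm
  | sum : Tm → Tm → Tm

/-- The justification variables occurring in a term. -/
def Tm.vars : Tm → Finset ℕ
  | .var x => {x}
  | .const _ => ∅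
  | .app s t => s.vars ∪ t.vars
  | .sum s t => s.vars ∪ t.vars

/-- Formulas of the basic justification logic J. -/
inductive Fm : Type
  | atom : ℕ → Fm
  | bot : Fm
  | imp : Fm → Fm → Fm
  | just : Tm → Fm → Fm

namespace Fm

def neg (A : Fm) : Fm := imp A bot

end Fm

open Fm

/-- Axiom instances of J: propositional tautologies (via a Hilbert basis),
Sum and jK. -/
inductive JAx : Fm → Prop
  | ax1 (A B : Fm) : JAx (imp A (imp B A))
  | ax2 (A B C : Fm) : JAx (imp (imp A (imp B C)) (imp (imp A B) (imp A C)))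
  | ax3 (A B : Fm) : JAx (imp (imp (neg A) (neg B)) (imp B A))
  | sum1 (s t : Tm) (A : Fm) : JAx (imp (.just s A) (.just (.sum s t) A))
  | sum2 (s t : Tm) (A : Fm) : JAx (imp (.just s A) (.just (.sum t s) A))
  | jk (s t : Tm) (A B : Fm) :
      JAx (imp (.just s (imp A B)) (imp (.just t A) (.just (.app s t) B)))

/-- Derivability in J_CS from a list of hypotheses: hypotheses, axiom
instances, members of the constant specification (the iterated axiom
necessitation rule IAN), and modus ponens. -/
inductive Deriv (CS : Fm → Prop) (Γ : List Fm) : Fm → Prop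
  | hyp {A : Fm} : A ∈ Γ → Deriv CS Γ A
  | axm {A : Fm} : JAx A → Deriv CS Γ A
  | cs {A : Fm} : CS A → Deriv CS Γ A
  | mp {A B : Fm} : Deriv CS Γ (imp A B) → Deriv CS Γ A → Deriv CS Γ B

/-- The Lifting Lemma for the basic justification logic J with an axiomatically
appropriate constant specification CS: if `F` is derivable from hypotheses
`A₁, …, Aₙ`, then there is a justification term `t` built from the variables
`x₁, …, xₙ` such that `t:F` is derivable from `x₁:A₁, …, xₙ:Aₙ`. -/
theorem lifting_lemma
    (CS : Fm → Prop)
    (hCSax : ∀ A, JAx A → ∃ c : ℕ, CS (.just (.const c) A))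
    (hCSiter : ∀ F, CS F → ∃ c : ℕ, CS (.just (.const c) F))
    (Γ : List Fm) (F : Fm)
    (h : Deriv CS Γ F) :
    ∃ t : Tm, (∀ i ∈ t.vars, i < Γ.length) ∧
      Deriv CS (Γ.mapIdx fun i A => Fm.just (Tm.var i) A) (Fm.just t F) := by
  induction h with
  | @hyp A hA =>
    obtain ⟨i, hi, hget⟩ := List.mem_iff_getElem.mp hA
    refine ⟨.var i, ?_, ?_⟩
    · intro j hj; simp [Tm.vars] at hj; omega
    · apply Deriv.hyp
      apply List.mem_iff_getElem.mpr
      refine ⟨i, by simp [hi], ?_⟩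
      simp [List.getElem_mapIdx, hget]
  | @axm A hA =>
    obtain ⟨c, hc⟩ := hCSax A hA
    exact ⟨.const c, by simp [Tm.vars], Deriv.cs hc⟩
  | @cs A hA =>
    obtain ⟨c, hc⟩ := hCSiter A hA
    exact ⟨.const c, by simp [Tm.vars], Deriv.cs hc⟩
  | @mp A B _ _ ih1 ih2 =>
    obtain ⟨s, hs, ds⟩ := ih1
    obtain ⟨t, ht, dt⟩ := ih2
    refine ⟨.app s t, ?_, ?_⟩
    · intro j hj; simp [Tm.vars] at hj; rcases hj with h | h
      exacts [hs j h, ht j h]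
    · exact Deriv.mp (Deriv.mp (Deriv.axm (JAx.jk s t A B)) ds) dt
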